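/- Let A be a real n×q matrix and let ℓ be a nonzero real number that is not an eigenvalue of AᵀA. Then ℓ I_n − A Aᵀ is invertible and I_n + A (ℓ I_q − Aᵀ A)^{-1} Aᵀ = ℓ (ℓ I_n − A Aᵀ)^{-1}. -/
import Mathlib


open MeasureTheory ProbabilityTheory Filter Matrix Topology

noncomputable section

lemma aux_isUnit_of_ker (m : ℕ) (M : Matrix (Fin m) (Fin m) ℝ)
    (h : ∀ v, M.mulVec v = 0 → v = 0) : IsUnit M := by
  rw [Matrix.isUnit_iff_isUnit_det, isUnit_iff_ne_zero]
  intro hd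
  obtain ⟨v, hv, hv0⟩ := (Matrix.exists_mulVec_eq_zero_iff).2 hd
  exact hv (h v hv0)

/-- if `ℓ ≠ 0` is not an eigenvalue of `AᵀA`, then `ℓIₙ - AAᵀ` is
invertible and `Iₙ + A(ℓI_q - AᵀA)⁻¹Aᵀ = ℓ(ℓIₙ - AAᵀ)⁻¹`. -/
theorem statement10 (n q : ℕ) (A : Matrix (Fin n) (Fin q) ℝ) (ℓ : ℝ) (hℓ : ℓ ≠ 0)
    (hnoteig : ∀ v : Fin q → ℝ, (Aᵀ * A).mulVec v = ℓ • v → v = 0) :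
    IsUnit (ℓ • (1 : Matrix (Fin n) (Fin n) ℝ) - A * Aᵀ) ∧
    1 + A * (ℓ • (1 : Matrix (Fin q) (Fin q) ℝ) - Aᵀ * A)⁻¹ * Aᵀ =
      ℓ • (ℓ • (1 : Matrix (Fin n) (Fin n) ℝ) - A * Aᵀ)⁻¹ := by
  set B : Matrix (Fin q) (Fin q) ℝ := ℓ • 1 - Aᵀ * A with hBdef
  set M : Matrix (Fin n) (Fin n) ℝ := ℓ • 1 - A * Aᵀ with hMdef
  have hB : IsUnit B := by
    apply aux_isUnit_of_ker
    intro v hv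
    apply hnoteig
    have : ℓ • v - (Aᵀ * A).mulVec v = 0 := by
      simpa [hBdef, Matrix.sub_mulVec, Matrix.smul_mulVec] using hv
    linear_combination (norm := module) -this
  have hM : IsUnit M := by
    apply aux_isUnit_of_ker
    intro v hv
    have hv' : (A * Aᵀ).mulVec v = ℓ • v := by
      have : ℓ • v - (A * Aᵀ).mulVec v = 0 := by
        simpa [hMdef, Matrix.sub_mulVec, Matrix.smul_mulVec] using hv
      linear_combination (norm := module) -this
    have h1 : (Aᵀ * A).mulVec (Aᵀ.mulVec v) = ℓ • Aᵀ.mulVec v := by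
      rw [Matrix.mulVec_mulVec, Matrix.mul_assoc, ← Matrix.mulVec_mulVec, hv',
        Matrix.mulVec_smul]
    have h2 : Aᵀ.mulVec v = 0 := hnoteig _ h1
    have h3 : ℓ • v = 0 := by
      rw [← hv', ← Matrix.mulVec_mulVec, h2, Matrix.mulVec_zero]
    exact (smul_eq_zero.mp h3).resolve_left hℓ
  refine ⟨hM, ?_⟩
  have hBdet : IsUnit B.det := (Matrix.isUnit_iff_isUnit_det B).mp hB
  have hMdet : IsUnit M.det := (Matrix.isUnit_iff_isUnit_det M).mp hM
  have hcomm : Aᵀ * M = B * Aᵀ := by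
    simp [hMdef, hBdef, Matrix.mul_sub, Matrix.sub_mul, mul_smul_comm,
      smul_mul_assoc, Matrix.mul_assoc]
  have key : (1 + A * B⁻¹ * Aᵀ) * M = ℓ • 1 := by
    rw [Matrix.add_mul, Matrix.one_mul, Matrix.mul_assoc (A * B⁻¹) Aᵀ M, hcomm,
      ← Matrix.mul_assoc, Matrix.mul_assoc A B⁻¹ B,
      Matrix.nonsing_inv_mul B hBdet, Matrix.mul_one, hMdef]
    abel
  calc 1 + A * B⁻¹ * Aᵀ
      = (1 + A * B⁻¹ * Aᵀ) * (M * M⁻¹) := by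
        rw [Matrix.mul_nonsing_inv M hMdet, Matrix.mul_one]
    _ = ((1 + A * B⁻¹ * Aᵀ) * M) * M⁻¹ := by rw [mul_assoc]
    _ = ℓ • M⁻¹ := by rw [key, Matrix.smul_mul, Matrix.one_mul]

end
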